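/- Let (Ω, P, π) be a finite lazy irreducible reversible Markov chain, Z ⊂ Ω nonempty, x ∈ Ω, and suppose Z is balanced seen from x, i.e. for every t with P_x[T_Z = t] > 0 and every z ∈ Z, P_x[X_t = z | T_Z = t] = π(z)/π(Z). Then for p, ε ∈ (0,1), with t_{x,Z}(p) := min{t : P_x[T_Z > t] ≤ p} and r_ε := ⌈t_rel·log(π(Zᶜ)/(π(Z)ε²))/2⌉, one has ‖P_x^{t_{x,Z}(p)+r_ε} - π‖_TV ≤ p + ε. -/

import Mathlib

open Finset

/-- `survSet P Z t x = P_x[T_Z > t]`: the probability, starting from `x`, of not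
having visited the set `Z` by time `t`. -/
noncomputable def survSet {Ω : Type*} [Fintype Ω] [DecidableEq Ω]
    (P : Matrix Ω Ω ℝ) (Z : Finset Ω) : ℕ → Ω → ℝ
  | 0, x => if x ∈ Z then 0 else 1
  | (t + 1), x => if x ∈ Z then 0 else ∑ y, P x y * survSet P Z t y

/-- `fstHit P Z t x z = P_x[T_Z = t, X_{T_Z} = z]`: the probability, starting from
`x`, that the first visit to `Z` occurs at time `t` and lands at `z`. -/
noncomputable def fstHit {Ω : Type*} [Fintype Ω] [DecidableEq Ω]
    (P : Matrix Ω Ω ℝ) (Z : Finset Ω) : ℕ → Ω → Ω → ℝ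
  | 0, x, z => if x ∈ Z ∧ x = z then 1 else 0
  | (t + 1), x, z => if x ∈ Z then 0 else ∑ y, P x y * fstHit P Z t y z


namespace St19
variable {Ω : Type*} [Fintype Ω] [DecidableEq Ω]

/-- The sub-Markov kernel killed on `Z`. -/
noncomputable def Qm (P : Matrix Ω Ω ℝ) (Z : Finset Ω) : Matrix Ω Ω ℝ :=
  Matrix.of fun x y => if x ∈ Z then 0 else P x y

variable {P : Matrix Ω Ω ℝ} {Z : Finset Ω} {π : Ω → ℝ}

lemma Qm_apply (x y : Ω) : Qm P Z x y = if x ∈ Z then 0 else P x y := rfl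

lemma Ppow_nonneg (hP0 : ∀ x y, 0 ≤ P x y) : ∀ (t : ℕ) (x u : Ω), 0 ≤ (P ^ t) x u := by
  intro t
  induction t with
  | zero => intro x u; simp [Matrix.one_apply]; positivity
  | succ t ih =>
    intro x u
    rw [pow_succ, Matrix.mul_apply]
    exact Finset.sum_nonneg fun y _ => mul_nonneg (ih x y) (hP0 y u)

lemma Ppow_rowsum (hP1 : ∀ x, ∑ y, P x y = 1) : ∀ (t : ℕ) (x : Ω), ∑ u, (P ^ t) x u = 1 := by
  intro t
  induction t with
  | zero => intro x; simp [Matrix.one_apply]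
  | succ t ih =>
    intro x
    simp only [pow_succ', Matrix.mul_apply]
    rw [Finset.sum_comm]
    calc ∑ y, ∑ u, P x y * (P ^ t) y u = ∑ y, P x y * ∑ u, (P ^ t) y u := by
          simp [Finset.mul_sum]
      _ = 1 := by simp only [ih, mul_one, hP1]

lemma Qpow_nonneg (hP0 : ∀ x y, 0 ≤ P x y) : ∀ (t : ℕ) (x u : Ω), 0 ≤ (Qm P Z ^ t) x u := by
  intro t
  induction t with
  | zero => intro x u; simp [Matrix.one_apply]; positivity
  | succ t ih =>
    intro x u
    rw [pow_succ, Matrix.mul_apply]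
    refine Finset.sum_nonneg fun y _ => mul_nonneg (ih x y) ?_
    rw [Qm_apply]; split <;> [rfl; exact hP0 y u]

lemma Qpow_le_Ppow (hP0 : ∀ x y, 0 ≤ P x y) :
    ∀ (t : ℕ) (x u : Ω), (Qm P Z ^ t) x u ≤ (P ^ t) x u := by
  intro t
  induction t with
  | zero => intro x u; simp
  | succ t ih =>
    intro x u
    rw [pow_succ, pow_succ, Matrix.mul_apply, Matrix.mul_apply]
    refine Finset.sum_le_sum fun y _ => ?_
    refine mul_le_mul (ih x y) ?_ ?_ (Ppow_nonneg hP0 t x y)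
    · rw [Qm_apply]; split
      · exact hP0 y u
      · exact le_rfl
    · rw [Qm_apply]; split
      · exact le_rfl
      · exact hP0 y u

lemma surv_eq : ∀ (t : ℕ) (x : Ω), survSet P Z t x = ∑ u ∈ Zᶜ, (Qm P Z ^ t) x u := by
  intro t
  induction t with
  | zero =>
    intro x
    by_cases hx : x ∈ Z <;>
      simp [survSet, hx, Matrix.one_apply, Finset.sum_ite_eq', Finset.mem_compl]
  | succ t ih =>
    intro x
    by_cases hx : x ∈ Z
    · rw [show survSet P Z (t+1) x = 0 from by simp [survSet, hx]]
      rw [eq_comm]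
      refine Finset.sum_eq_zero fun u _ => ?_
      rw [pow_succ', Matrix.mul_apply]
      exact Finset.sum_eq_zero fun y _ => by simp [Qm_apply, hx]
    · rw [show survSet P Z (t+1) x = ∑ y, P x y * survSet P Z t y from by simp [survSet, hx]]
      simp only [ih]
      rw [eq_comm]
      calc ∑ u ∈ Zᶜ, (Qm P Z ^ (t+1)) x u
          = ∑ u ∈ Zᶜ, ∑ y, Qm P Z x y * (Qm P Z ^ t) y u := by
            refine Finset.sum_congr rfl fun u _ => ?_
            rw [pow_succ']; rfl
        _ = ∑ y, ∑ u ∈ Zᶜ, Qm P Z x y * (Qm P Z ^ t) y u := Finset.sum_comm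
        _ = ∑ y, P x y * ∑ u ∈ Zᶜ, (Qm P Z ^ t) y u := by
            refine Finset.sum_congr rfl fun y _ => ?_
            rw [Finset.mul_sum]
            exact Finset.sum_congr rfl fun u _ => by rw [Qm_apply, if_neg hx]

lemma fstHit_eq (z : Ω) (hz : z ∈ Z) :
    ∀ (t : ℕ) (x : Ω), fstHit P Z t x z = (Qm P Z ^ t) x z := by
  intro t
  induction t with
  | zero =>
    intro x
    by_cases hx : x ∈ Z <;> by_cases hxz : x = z <;>
      simp [fstHit, hx, hxz, Matrix.one_apply, hz] <;> subst hxz <;> simp_all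
  | succ t ih =>
    intro x
    by_cases hx : x ∈ Z
    · rw [show fstHit P Z (t+1) x z = 0 from by simp [fstHit, hx]]
      rw [pow_succ', Matrix.mul_apply, eq_comm]
      exact Finset.sum_eq_zero fun y _ => by simp [Qm_apply, hx]
    · rw [show fstHit P Z (t+1) x z = ∑ y, P x y * fstHit P Z t y z from by simp [fstHit, hx]]
      rw [pow_succ', Matrix.mul_apply]
      exact Finset.sum_congr rfl fun y _ => by rw [ih, Qm_apply, if_neg hx]

lemma rev_pow (hrev : ∀ x y, π x * P x y = π y * P y x) :
    ∀ (t : ℕ) (v u : Ω), π v * (P ^ t) v u = π u * (P ^ t) u v := by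
  intro t
  induction t with
  | zero => intro v u; by_cases h : v = u <;> simp [Matrix.one_apply, h] <;> rw [eq_comm] at h <;> simp [h]
  | succ t ih =>
    intro v u
    conv_lhs => rw [pow_succ']
    conv_rhs => rw [pow_succ]
    rw [Matrix.mul_apply, Matrix.mul_apply, Finset.mul_sum, Finset.mul_sum]
    refine Finset.sum_congr rfl fun y _ => ?_
    calc π v * (P v y * (P ^ t) y u) = (π v * P v y) * (P ^ t) y u := by ring
      _ = (π y * P y v) * (P ^ t) y u := by rw [hrev]
      _ = (π y * (P ^ t) y u) * P y v := by ring
      _ = (π u * (P ^ t) u y) * P y v := by rw [ih]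
      _ = π u * ((P ^ t) u y * P y v) := by ring

lemma stationary_pow (hrev : ∀ x y, π x * P x y = π y * P y x)
    (hP1 : ∀ x, ∑ y, P x y = 1) (t : ℕ) (u : Ω) :
    ∑ v, π v * (P ^ t) v u = π u := by
  calc ∑ v, π v * (P ^ t) v u = ∑ v, π u * (P ^ t) u v := by
        exact Finset.sum_congr rfl fun v _ => rev_pow hrev t v u
    _ = π u := by rw [← Finset.mul_sum, Ppow_rowsum hP1, mul_one]


variable {Ω : Type*} [Fintype Ω] [DecidableEq Ω]
variable {P : Matrix Ω Ω ℝ} {Z : Finset Ω} {π : Ω → ℝ}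

/-- Max principle: any eigenvalue of a lazy stochastic matrix lies in `[0,1]`. -/
lemma eig_bounds (hP0 : ∀ x y, 0 ≤ P x y) (hP1 : ∀ x, ∑ y, P x y = 1)
    (hlazy : ∀ x, (1 : ℝ) / 2 ≤ P x x) {r : ℝ} {f : Ω → ℝ} (hf : f ≠ 0)
    (heig : P.mulVec f = r • f) : 0 ≤ r ∧ r ≤ 1 := by
  have hΩ : Nonempty Ω := by
    by_contra h
    exact hf (funext fun v => absurd ⟨v⟩ h)
  obtain ⟨v, -, hv⟩ := Finset.exists_max_image Finset.univ (fun y => |f y|)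
    ⟨Classical.arbitrary Ω, Finset.mem_univ _⟩
  have hvpos : 0 < |f v| := by
    rcases Function.ne_iff.1 hf with ⟨w, hw⟩
    calc 0 < |f w| := abs_pos.2 hw
      _ ≤ |f v| := hv w (Finset.mem_univ w)
  have hmv : ∑ y, P v y * f y = r * f v := by
    have := congrFun heig v
    simpa [Matrix.mulVec, dotProduct, Pi.smul_apply, smul_eq_mul] using this
  have key : |2 * r - 1| * |f v| ≤ |f v| := by
    have h1 : (2 * r - 1) * f v = ∑ y, (2 * P v y - if y = v then 1 else 0) * f y := by
      have h2 : ∑ y, (2 * P v y - if y = v then 1 else 0) * f y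
          = 2 * ∑ y, P v y * f y - f v := by
        simp only [sub_mul, Finset.sum_sub_distrib, ite_mul, one_mul, zero_mul,
          Finset.sum_ite_eq', Finset.mem_univ, if_true, Finset.mul_sum]
        congr 1
        exact Finset.sum_congr rfl fun y _ => by ring
      rw [h2, hmv]; ring
    calc |2 * r - 1| * |f v| = |(2 * r - 1) * f v| := (abs_mul _ _).symm
      _ = |∑ y, (2 * P v y - if y = v then 1 else 0) * f y| := by rw [h1]
      _ ≤ ∑ y, |(2 * P v y - if y = v then 1 else 0) * f y| := Finset.abs_sum_le_sum_abs _ _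
      _ ≤ ∑ y, (2 * P v y - if y = v then 1 else 0) * |f v| := by
          refine Finset.sum_le_sum fun y _ => ?_
          have hc : 0 ≤ 2 * P v y - if y = v then 1 else 0 := by
            rcases eq_or_ne y v with h | h
            · subst h; rw [if_pos rfl]; nlinarith [hlazy y]
            · rw [if_neg h]; nlinarith [hP0 v y]
          rw [abs_mul, abs_of_nonneg hc]
          exact mul_le_mul_of_nonneg_left (hv y (Finset.mem_univ y)) hc
      _ = (2 * 1 - 1) * |f v| := by
          rw [← Finset.sum_mul]
          congr 1
          rw [Finset.sum_sub_distrib, ← Finset.mul_sum, hP1]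
          simp
      _ = |f v| := by ring
  have h2 : |2 * r - 1| ≤ 1 := le_of_mul_le_mul_right (by simpa using key) hvpos
  rw [abs_le] at h2
  constructor <;> linarith [h2.1, h2.2]

/-- No eigenvalue `1` on the orthogonal complement of constants. -/
lemma eig_ne_one (hP0 : ∀ x y, 0 ≤ P x y) (hP1 : ∀ x, ∑ y, P x y = 1)
    (hπ0 : ∀ x, 0 < π x) (hπ1 : ∑ x, π x = 1)
    (hirr : ∀ x y, ∃ t : ℕ, 0 < (P ^ t) x y)
    {f : Ω → ℝ} (hf : f ≠ 0) (horth : ∑ v, π v * f v = 0)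
    (heig : P.mulVec f = (1 : ℝ) • f) : False := by
  have hΩ : Nonempty Ω := by
    by_contra h
    exact hf (funext fun v => absurd ⟨v⟩ h)
  have hpow : ∀ t : ℕ, (P ^ t).mulVec f = f := by
    intro t
    induction t with
    | zero => simp
    | succ t ih =>
      rw [pow_succ', ← Matrix.mulVec_mulVec, ih]
      simpa using heig
  obtain ⟨v, -, hv⟩ := Finset.exists_max_image Finset.univ f
    ⟨Classical.arbitrary Ω, Finset.mem_univ _⟩
  have hconst : ∀ y, f y = f v := by
    intro y
    obtain ⟨t, ht⟩ := hirr v y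
    have hfv : ∑ u, (P ^ t) v u * f u = f v := by
      have := congrFun (hpow t) v
      simpa [Matrix.mulVec, dotProduct] using this
    have hzero : ∑ u, (P ^ t) v u * (f v - f u) = 0 := by
      have hsplit : ∑ u, (P ^ t) v u * (f v - f u)
          = (∑ u, (P ^ t) v u) * f v - ∑ u, (P ^ t) v u * f u := by
        simp only [mul_sub]
        rw [Finset.sum_sub_distrib, ← Finset.sum_mul]
      rw [hsplit, Ppow_rowsum hP1 t v, hfv]; ring
    have hterm := (Finset.sum_eq_zero_iff_of_nonneg (fun u _ =>
      mul_nonneg (Ppow_nonneg hP0 t v u) (sub_nonneg.2 (hv u (Finset.mem_univ u))))).1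
      hzero y (Finset.mem_univ y)
    have := mul_eq_zero.1 hterm
    rcases this with h | h
    · exact absurd h (ne_of_gt ht)
    · linarith [sub_eq_zero.1 h]
  have hc : f v = 0 := by
    have : ∑ u, π u * f u = f v := by
      calc ∑ u, π u * f u = ∑ u, π u * f v := Finset.sum_congr rfl fun u _ => by rw [hconst u]
        _ = (∑ u, π u) * f v := by rw [Finset.sum_mul]
        _ = f v := by rw [hπ1, one_mul]
    linarith [horth, this]
  exact hf (funext fun y => by rw [hconst y, hc]; rfl)



variable {Ω : Type*} [Fintype Ω] [DecidableEq Ω]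
variable {P : Matrix Ω Ω ℝ} {Z : Finset Ω} {π : Ω → ℝ} {lam2 : ℝ}

/-- The symmetrized kernel. -/
noncomputable def Sm (P : Matrix Ω Ω ℝ) (π : Ω → ℝ) : Matrix Ω Ω ℝ :=
  Matrix.of fun u v => Real.sqrt (π u) * P u v / Real.sqrt (π v)

lemma Sm_apply (u v : Ω) : Sm P π u v = Real.sqrt (π u) * P u v / Real.sqrt (π v) := rfl

lemma sq_pos (hπ0 : ∀ x, 0 < π x) (u : Ω) : 0 < Real.sqrt (π u) := Real.sqrt_pos.2 (hπ0 u)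

lemma sq_mul_self (hπ0 : ∀ x, 0 < π x) (u : Ω) :
    Real.sqrt (π u) * Real.sqrt (π u) = π u := Real.mul_self_sqrt (hπ0 u).le

lemma Sm_herm (hπ0 : ∀ x, 0 < π x) (hrev : ∀ x y, π x * P x y = π y * P y x) :
    (Sm P π).IsHermitian := by
  refine Matrix.IsHermitian.ext fun u v => ?_
  simp only [Sm_apply, star_trivial]
  have h1 := sq_pos hπ0 u
  have h2 := sq_pos hπ0 v
  rw [div_eq_div_iff h1.ne' h2.ne']
  have := hrev v u
  rw [← sq_mul_self hπ0 u, ← sq_mul_self hπ0 v] at this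
  nlinarith [this]

lemma Sm_symm_move (hπ0 : ∀ x, 0 < π x) (hrev : ∀ x y, π x * P x y = π y * P y x)
    (x y : Ω → ℝ) :
    ∑ u, (Sm P π).mulVec x u * y u = ∑ u, x u * (Sm P π).mulVec y u := by
  have hsym : ∀ u v : Ω, Sm P π u v = Sm P π v u := fun u v =>
    (star_trivial _).symm.trans ((Sm_herm hπ0 hrev).apply v u)
  simp only [Matrix.mulVec, dotProduct, Finset.sum_mul, Finset.mul_sum]
  rw [Finset.sum_comm]
  refine Finset.sum_congr rfl fun v _ => Finset.sum_congr rfl fun u _ => ?_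
  rw [hsym u v]; ring

lemma Sm_perron (hπ0 : ∀ x, 0 < π x) (hP1 : ∀ x, ∑ y, P x y = 1) :
    (Sm P π).mulVec (fun u => Real.sqrt (π u)) = fun u => Real.sqrt (π u) := by
  funext u
  simp only [Matrix.mulVec, dotProduct, Sm_apply]
  calc ∑ v, Real.sqrt (π u) * P u v / Real.sqrt (π v) * Real.sqrt (π v)
      = ∑ v, Real.sqrt (π u) * P u v := by
        refine Finset.sum_congr rfl fun v _ => ?_
        rw [div_mul_cancel₀]
        exact (sq_pos hπ0 v).ne'
    _ = Real.sqrt (π u) := by rw [← Finset.mul_sum, hP1, mul_one]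

lemma eig_transfer (hπ0 : ∀ x, 0 < π x) {μ : ℝ} {g : Ω → ℝ}
    (hg : (Sm P π).mulVec g = μ • g) :
    P.mulVec (fun u => g u / Real.sqrt (π u)) = μ • (fun u => g u / Real.sqrt (π u)) := by
  funext u
  have h := congrFun hg u
  simp only [Matrix.mulVec, dotProduct, Sm_apply, Pi.smul_apply, smul_eq_mul] at h ⊢
  have hu := sq_pos hπ0 u
  refine mul_right_cancel₀ hu.ne' ?_
  calc (∑ v, P u v * (g v / Real.sqrt (π v))) * Real.sqrt (π u)
      = ∑ v, Real.sqrt ((π u)) * P u v / Real.sqrt (π v) * g v := by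
        rw [Finset.sum_mul]
        refine Finset.sum_congr rfl fun v _ => ?_
        have hv := sq_pos hπ0 v
        field_simp
    _ = μ * g u := h
    _ = μ * (g u / Real.sqrt (π u)) * Real.sqrt (π u) := by field_simp

/-- parseval for an orthonormal basis of Euclidean space, real case -/
lemma parseval {b : OrthonormalBasis Ω ℝ (EuclideanSpace ℝ Ω)} (x : EuclideanSpace ℝ Ω) :
    ∑ i, (b.repr x i) ^ 2 = ∑ u, (x u) ^ 2 := by
  have h1 : ‖b.repr x‖ = ‖x‖ := b.repr.norm_map x
  rw [EuclideanSpace.norm_eq, EuclideanSpace.norm_eq] at h1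
  have h3 := (Real.sqrt_inj (Finset.sum_nonneg fun i _ => by positivity)
    (Finset.sum_nonneg fun i _ => by positivity)).1 h1
  simpa [Real.norm_eq_abs, sq_abs] using h3

lemma inner_eq (x y : EuclideanSpace ℝ Ω) : (inner ℝ x y : ℝ) = ∑ u, x u * y u := by
  simp [PiLp.inner_apply, RCLike.inner_apply, conj_trivial, mul_comm]



variable {Ω : Type*} [Fintype Ω] [DecidableEq Ω]
variable {P : Matrix Ω Ω ℝ} {Z : Finset Ω} {π : Ω → ℝ} {lam2 : ℝ}

lemma key_contract (hP0 : ∀ x y, 0 ≤ P x y) (hP1 : ∀ x, ∑ y, P x y = 1)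
    (hπ0 : ∀ x, 0 < π x) (hπ1 : ∑ x, π x = 1)
    (hrev : ∀ x y, π x * P x y = π y * P y x)
    (hirr : ∀ x y, ∃ t : ℕ, 0 < (P ^ t) x y)
    (hlazy : ∀ x, (1 : ℝ) / 2 ≤ P x x)
    (hub : lam2 ∈ upperBounds {r : ℝ | ∃ f : Ω → ℝ, f ≠ 0 ∧ (∑ v, π v * f v) = 0 ∧
      P.mulVec f = r • f})
    (hl0 : 0 ≤ lam2)
    (g : Ω → ℝ) (hg : ∑ u, Real.sqrt (π u) * g u = 0) :
    ∑ u, ((Sm P π).mulVec g u) ^ 2 ≤ lam2 ^ 2 * ∑ u, (g u) ^ 2 := by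
  have hS : (Sm P π).IsHermitian := Sm_herm hπ0 hrev
  set b := hS.eigenvectorBasis with hb
  set μ := hS.eigenvalues with hμ
  set G : EuclideanSpace ℝ Ω := WithLp.toLp 2 g with hG
  set SG : EuclideanSpace ℝ Ω := WithLp.toLp 2 ((Sm P π).mulVec g) with hSG
  have hmv : ∀ i, (Sm P π).mulVec (fun v => (b i) v) = fun u => μ i * (b i) u := by
    intro i
    funext u
    exact congrFun (hS.mulVec_eigenvectorBasis i) u
  have hrepr : ∀ i, b.repr SG i = μ i * b.repr G i := by
    intro i
    rw [OrthonormalBasis.repr_apply_apply, OrthonormalBasis.repr_apply_apply,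
      inner_eq, inner_eq]
    calc ∑ u, (b i) u * SG u = ∑ u, ((Sm P π).mulVec fun v => (b i) v) u * G u := by
          rw [Sm_symm_move hπ0 hrev]
      _ = ∑ u, (μ i * (b i) u) * G u := by
          refine Finset.sum_congr rfl fun u _ => ?_
          rw [congrFun (hmv i) u]
      _ = μ i * ∑ u, (b i) u * G u := by
          rw [Finset.mul_sum]
          exact Finset.sum_congr rfl fun u _ => by ring
  -- per-index bound
  have hper : ∀ i, (μ i * b.repr G i) ^ 2 ≤ lam2 ^ 2 * (b.repr G i) ^ 2 := by
    intro i
    rcases eq_or_ne (b.repr G i) 0 with hc | hc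
    · rw [hc]; simp
    have hbne : ∃ u, (b i) u ≠ 0 := by
      by_contra h
      push_neg at h
      exact b.orthonormal.ne_zero i (by ext u; exact h u)
    -- first: the eigenvector is orthogonal to the Perron vector
    have hwi : ∑ u, Real.sqrt (π u) * (b i) u = 0 := by
      by_contra hwi
      -- then μ i = 1
      have hmu1 : μ i = 1 := by
        have h1 : ∑ u, ((Sm P π).mulVec (fun u => Real.sqrt (π u))) u * (b i) u
            = ∑ u, Real.sqrt (π u) * ((Sm P π).mulVec fun v => (b i) v) u :=
          Sm_symm_move hπ0 hrev _ _
        rw [Sm_perron hπ0 hP1] at h1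
        have h2 : ∑ u, Real.sqrt (π u) * ((Sm P π).mulVec fun v => (b i) v) u
            = μ i * ∑ u, Real.sqrt (π u) * (b i) u := by
          rw [Finset.mul_sum]
          refine Finset.sum_congr rfl fun u _ => ?_
          rw [congrFun (hmv i) u]
          ring
        have h3 : ∑ u, Real.sqrt (π u) * (b i) u
            = μ i * ∑ u, Real.sqrt (π u) * (b i) u := h1.trans h2
        refine mul_right_cancel₀ hwi ?_
        rw [one_mul]
        exact h3.symm
      -- so b i - α • sqrt π  is an eigenvector of eigenvalue 1
      set α := ∑ u, Real.sqrt (π u) * (b i) u with hα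
      set u0 : Ω → ℝ := (fun u => (b i) u - α * Real.sqrt (π u)) with hu0
      have hSu0 : (Sm P π).mulVec u0 = (1 : ℝ) • u0 := by
        have : u0 = (fun u => (b i) u) - α • (fun u => Real.sqrt (π u)) := by
          funext u; simp [hu0, smul_eq_mul]
        rw [this, Matrix.mulVec_sub, Matrix.mulVec_smul, Sm_perron hπ0 hP1]
        funext u
        have hmvu := congrFun (hmv i) u
        simp only [Pi.sub_apply, Pi.smul_apply, smul_eq_mul, Pi.one_apply]
        rw [show ((Sm P π).mulVec fun v => (b i) v) u = μ i * (b i) u from hmvu, hmu1]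
        simp [hu0]
      have horth0 : ∑ u, Real.sqrt (π u) * u0 u = 0 := by
        simp only [hu0, mul_sub, Finset.sum_sub_distrib]
        have : ∑ u, Real.sqrt (π u) * (α * Real.sqrt (π u)) = α := by
          calc ∑ u, Real.sqrt (π u) * (α * Real.sqrt (π u))
              = α * ∑ u, π u := by
                rw [Finset.mul_sum]
                refine Finset.sum_congr rfl fun u _ => ?_
                calc Real.sqrt (π u) * (α * Real.sqrt (π u))
                    = α * (Real.sqrt (π u) * Real.sqrt (π u)) := by ring
                  _ = α * π u := by rw [sq_mul_self hπ0 u]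
            _ = α := by rw [hπ1, mul_one]
        rw [this]
        simp [hα]
      rcases eq_or_ne u0 0 with h0 | h0
      · -- then b i is proportional to sqrt π, so the coefficient vanishes
        apply hc
        rw [OrthonormalBasis.repr_apply_apply, inner_eq]
        have hbi : ∀ u, (b i) u = α * Real.sqrt (π u) := by
          intro u
          have := congrFun h0 u
          simp only [hu0, Pi.zero_apply] at this
          linarith
        calc ∑ u, (b i) u * G u = ∑ u, α * (Real.sqrt (π u) * g u) := by
              refine Finset.sum_congr rfl fun u _ => ?_
              rw [hbi u]; ring
          _ = α * ∑ u, Real.sqrt (π u) * g u := by rw [Finset.mul_sum]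
          _ = 0 := by rw [hg, mul_zero]
      · -- otherwise we get an eigenvalue 1 orthogonal to constants: contradiction
        exfalso
        have hfvec : P.mulVec (fun u => u0 u / Real.sqrt (π u))
            = (1 : ℝ) • (fun u => u0 u / Real.sqrt (π u)) := eig_transfer hπ0 hSu0
        have hfne : (fun u => u0 u / Real.sqrt (π u)) ≠ 0 := by
          rcases Function.ne_iff.1 h0 with ⟨u, hu⟩
          intro h
          have := congrFun h u
          simp only [Pi.zero_apply] at this hu
          exact hu (by
            have := div_eq_zero_iff.1 this
            rcases this with h' | h'
            · exact h'
            · exact absurd h' (sq_pos hπ0 u).ne')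
        have hforth : ∑ v, π v * (u0 v / Real.sqrt (π v)) = 0 := by
          calc ∑ v, π v * (u0 v / Real.sqrt (π v))
              = ∑ v, Real.sqrt (π v) * u0 v := by
                refine Finset.sum_congr rfl fun v _ => ?_
                rw [show π v * (u0 v / Real.sqrt (π v))
                    = (π v / Real.sqrt (π v)) * u0 v from by ring, Real.div_sqrt]
            _ = 0 := horth0
        exact eig_ne_one hP0 hP1 hπ0 hπ1 hirr hfne hforth hfvec
    -- orthogonal case: μ i is an admissible eigenvalue
    have hfvec : P.mulVec (fun u => (b i) u / Real.sqrt (π u))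
        = μ i • (fun u => (b i) u / Real.sqrt (π u)) := by
      refine eig_transfer hπ0 (g := fun v => (b i) v) ?_
      funext u
      rw [congrFun (hmv i) u]
      simp [smul_eq_mul]
    have hfne : (fun u => (b i) u / Real.sqrt (π u)) ≠ 0 := by
      rcases hbne with ⟨u, hu⟩
      intro h
      have := congrFun h u
      simp only [Pi.zero_apply] at this
      rcases div_eq_zero_iff.1 this with h' | h'
      · exact hu h'
      · exact absurd h' (sq_pos hπ0 u).ne'
    have hforth : ∑ v, π v * ((b i) v / Real.sqrt (π v)) = 0 := by
      calc ∑ v, π v * ((b i) v / Real.sqrt (π v))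
          = ∑ v, Real.sqrt (π v) * (b i) v := by
            refine Finset.sum_congr rfl fun v _ => ?_
            rw [show π v * ((b i) v / Real.sqrt (π v))
                = (π v / Real.sqrt (π v)) * (b i) v from by ring, Real.div_sqrt]
        _ = 0 := hwi
    have hle : μ i ≤ lam2 := hub ⟨_, hfne, hforth, hfvec⟩
    have h0 : 0 ≤ μ i := (eig_bounds hP0 hP1 hlazy hfne hfvec).1
    rw [mul_pow]
    exact mul_le_mul_of_nonneg_right (pow_le_pow_left₀ h0 hle 2) (sq_nonneg _)
  calc ∑ u, ((Sm P π).mulVec g u) ^ 2 = ∑ i, (b.repr SG i) ^ 2 := (parseval SG).symm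
    _ = ∑ i, (μ i * b.repr G i) ^ 2 := by
        exact Finset.sum_congr rfl fun i _ => by rw [hrepr i]
    _ ≤ ∑ i, lam2 ^ 2 * (b.repr G i) ^ 2 := Finset.sum_le_sum fun i _ => hper i
    _ = lam2 ^ 2 * ∑ i, (b.repr G i) ^ 2 := by rw [Finset.mul_sum]
    _ = lam2 ^ 2 * ∑ u, (g u) ^ 2 := by rw [parseval G]



variable {Ω : Type*} [Fintype Ω] [DecidableEq Ω]
variable {P : Matrix Ω Ω ℝ} {Z : Finset Ω} {π : Ω → ℝ} {lam2 : ℝ}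

lemma step_contract (hP0 : ∀ x y, 0 ≤ P x y) (hP1 : ∀ x, ∑ y, P x y = 1)
    (hπ0 : ∀ x, 0 < π x) (hπ1 : ∑ x, π x = 1)
    (hrev : ∀ x y, π x * P x y = π y * P y x)
    (hirr : ∀ x y, ∃ t : ℕ, 0 < (P ^ t) x y)
    (hlazy : ∀ x, (1 : ℝ) / 2 ≤ P x x)
    (hub : lam2 ∈ upperBounds {r : ℝ | ∃ f : Ω → ℝ, f ≠ 0 ∧ (∑ v, π v * f v) = 0 ∧
      P.mulVec f = r • f})
    (hl0 : 0 ≤ lam2)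
    (f : Ω → ℝ) (hf : ∑ u, π u * f u = 0) :
    ∑ u, π u * (P.mulVec f u) ^ 2 ≤ lam2 ^ 2 * ∑ u, π u * (f u) ^ 2 := by
  have hg : ∑ u, Real.sqrt (π u) * (Real.sqrt (π u) * f u) = 0 := by
    rw [← hf]
    refine Finset.sum_congr rfl fun u _ => ?_
    rw [← mul_assoc, sq_mul_self hπ0 u]
  have h := key_contract hP0 hP1 hπ0 hπ1 hrev hirr hlazy hub hl0
    (fun u => Real.sqrt (π u) * f u) hg
  have hSg : ∀ u, (Sm P π).mulVec (fun v => Real.sqrt (π v) * f v) u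
      = Real.sqrt (π u) * P.mulVec f u := by
    intro u
    simp only [Matrix.mulVec, dotProduct, Sm_apply, Finset.mul_sum]
    refine Finset.sum_congr rfl fun v _ => ?_
    have hv := (sq_pos hπ0 v).ne'
    field_simp
  calc ∑ u, π u * (P.mulVec f u) ^ 2
      = ∑ u, ((Sm P π).mulVec (fun v => Real.sqrt (π v) * f v) u) ^ 2 := by
        refine Finset.sum_congr rfl fun u _ => ?_
        rw [hSg u, mul_pow, Real.sq_sqrt (hπ0 u).le]
    _ ≤ lam2 ^ 2 * ∑ u, (Real.sqrt (π u) * f u) ^ 2 := h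
    _ = lam2 ^ 2 * ∑ u, π u * (f u) ^ 2 := by
        congr 1
        refine Finset.sum_congr rfl fun u _ => ?_
        rw [mul_pow, Real.sq_sqrt (hπ0 u).le]

lemma pow_contract (hP0 : ∀ x y, 0 ≤ P x y) (hP1 : ∀ x, ∑ y, P x y = 1)
    (hπ0 : ∀ x, 0 < π x) (hπ1 : ∑ x, π x = 1)
    (hrev : ∀ x y, π x * P x y = π y * P y x)
    (hirr : ∀ x y, ∃ t : ℕ, 0 < (P ^ t) x y)
    (hlazy : ∀ x, (1 : ℝ) / 2 ≤ P x x)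
    (hub : lam2 ∈ upperBounds {r : ℝ | ∃ f : Ω → ℝ, f ≠ 0 ∧ (∑ v, π v * f v) = 0 ∧
      P.mulVec f = r • f})
    (hl0 : 0 ≤ lam2)
    (f : Ω → ℝ) (hf : ∑ u, π u * f u = 0) (m : ℕ) :
    (∑ u, π u * ((P ^ m).mulVec f u) = 0) ∧
      ∑ u, π u * ((P ^ m).mulVec f u) ^ 2 ≤ lam2 ^ (2 * m) * ∑ u, π u * (f u) ^ 2 := by
  induction m with
  | zero =>
    constructor
    · simpa using hf
    · simp
  | succ m ih =>
    have hFsucc : (P ^ (m + 1)).mulVec f = P.mulVec ((P ^ m).mulVec f) := by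
      rw [pow_succ', ← Matrix.mulVec_mulVec]
    constructor
    · rw [hFsucc]
      set F := (P ^ m).mulVec f with hF
      calc ∑ u, π u * P.mulVec F u = ∑ u, ∑ v, π u * P u v * F v := by
            refine Finset.sum_congr rfl fun u _ => ?_
            simp only [Matrix.mulVec, dotProduct, Finset.mul_sum]
            exact Finset.sum_congr rfl fun v _ => by ring
        _ = ∑ v, ∑ u, π u * P u v * F v := Finset.sum_comm
        _ = ∑ v, π v * F v := by
            refine Finset.sum_congr rfl fun v _ => ?_
            rw [← Finset.sum_mul]
            congr 1
            calc ∑ u, π u * P u v = ∑ u, π v * P v u :=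
                  Finset.sum_congr rfl fun u _ => hrev u v
              _ = π v := by rw [← Finset.mul_sum, hP1, mul_one]
        _ = 0 := ih.1
    · rw [hFsucc]
      calc ∑ u, π u * (P.mulVec ((P ^ m).mulVec f) u) ^ 2
          ≤ lam2 ^ 2 * ∑ u, π u * ((P ^ m).mulVec f u) ^ 2 :=
            step_contract hP0 hP1 hπ0 hπ1 hrev hirr hlazy hub hl0 _ ih.1
        _ ≤ lam2 ^ 2 * (lam2 ^ (2 * m) * ∑ u, π u * (f u) ^ 2) :=
            mul_le_mul_of_nonneg_left ih.2 (sq_nonneg _)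
        _ = lam2 ^ (2 * (m + 1)) * ∑ u, π u * (f u) ^ 2 := by
            rw [← mul_assoc, ← pow_add]
            ring_nf


variable {Ω : Type*} [Fintype Ω] [DecidableEq Ω]
variable {P : Matrix Ω Ω ℝ} {Z : Finset Ω} {π : Ω → ℝ} {lam2 : ℝ}

lemma Qpow_row_zero (x : Ω) (hx : x ∈ Z) (t : ℕ) (z : Ω) :
    (Qm P Z ^ (t + 1)) x z = 0 := by
  rw [pow_succ', Matrix.mul_apply]
  exact Finset.sum_eq_zero fun y _ => by simp [Qm_apply, hx]

lemma sum_one_restrict' (x u : Ω) (m : ℕ) :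
    ∑ z ∈ Z, (Qm P Z ^ 0) x z * (P ^ m) z u
      = if x ∈ Z then (P ^ m) x u else 0 := by
  rw [show ∑ z ∈ Z, (Qm P Z ^ 0) x z * (P ^ m) z u
      = ∑ z ∈ Z, if x = z then (P ^ m) z u else 0 from
    Finset.sum_congr rfl fun z _ => by
      rw [pow_zero, Matrix.one_apply, ite_mul, one_mul, zero_mul]]
  exact Finset.sum_ite_eq Z x _

lemma decomp (n : ℕ) (x u : Ω) :
    (P ^ n) x u = (∑ t ∈ Finset.range (n + 1), ∑ z ∈ Z,
        (Qm P Z ^ t) x z * (P ^ (n - t)) z u)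
      + (if u ∈ Z then 0 else (Qm P Z ^ n) x u) := by
  induction n generalizing x with
  | zero =>
    rw [Finset.range_one, Finset.sum_singleton, sum_one_restrict' (Z := Z) x u (0 - 0)]
    by_cases hx : x ∈ Z <;> by_cases hu : u ∈ Z
    · rw [if_pos hx, if_pos hu, add_zero]
    · have hxu : x ≠ u := fun h => hu (h ▸ hx)
      rw [if_pos hx, if_neg hu]
      simp [pow_zero, Matrix.one_apply, hxu]
    · have hxu : x ≠ u := fun h => hx (h ▸ hu)
      rw [if_neg hx, if_pos hu, zero_add]
      simp [pow_zero, Matrix.one_apply, hxu]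
    · rw [if_neg hx, if_neg hu, zero_add]
      rw [pow_zero, pow_zero]
  | succ n ih =>
    by_cases hx : x ∈ Z
    · rw [Finset.sum_range_succ']
      have hrest : ∑ t ∈ Finset.range (n + 1), ∑ z ∈ Z,
          (Qm P Z ^ (t + 1)) x z * (P ^ (n + 1 - (t + 1))) z u = 0 :=
        Finset.sum_eq_zero fun t _ => Finset.sum_eq_zero fun z _ => by
          rw [Qpow_row_zero x hx, zero_mul]
      have hlast : (if u ∈ Z then 0 else (Qm P Z ^ (n + 1)) x u) = 0 := by
        split
        · rfl
        · exact Qpow_row_zero x hx n u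
      rw [hrest, hlast, sum_one_restrict' (Z := Z) x u (n + 1 - 0), if_pos hx]
      simp
    · -- x ∉ Z
      have hPQ : ∀ y, P x y = Qm P Z x y := fun y => by rw [Qm_apply, if_neg hx]
      have hlhs : (P ^ (n + 1)) x u = ∑ y, P x y * (P ^ n) y u := by
        rw [pow_succ', Matrix.mul_apply]
      rw [hlhs]
      calc ∑ y, P x y * (P ^ n) y u
          = ∑ y, (P x y * (∑ t ∈ Finset.range (n + 1), ∑ z ∈ Z,
              (Qm P Z ^ t) y z * (P ^ (n - t)) z u)
            + P x y * (if u ∈ Z then 0 else (Qm P Z ^ n) y u)) := by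
            refine Finset.sum_congr rfl fun y _ => ?_
            rw [ih y, mul_add]
        _ = (∑ y, P x y * ∑ t ∈ Finset.range (n + 1), ∑ z ∈ Z,
              (Qm P Z ^ t) y z * (P ^ (n - t)) z u)
            + ∑ y, P x y * (if u ∈ Z then 0 else (Qm P Z ^ n) y u) :=
            Finset.sum_add_distrib
        _ = (∑ t ∈ Finset.range (n + 1), ∑ z ∈ Z,
              (Qm P Z ^ (t + 1)) x z * (P ^ (n + 1 - (t + 1))) z u)
            + (if u ∈ Z then 0 else (Qm P Z ^ (n + 1)) x u) := by
            congr 1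
            · calc ∑ y, P x y * ∑ t ∈ Finset.range (n + 1), ∑ z ∈ Z,
                    (Qm P Z ^ t) y z * (P ^ (n - t)) z u
                  = ∑ t ∈ Finset.range (n + 1), ∑ y, P x y * ∑ z ∈ Z,
                    (Qm P Z ^ t) y z * (P ^ (n - t)) z u := by
                    rw [← Finset.sum_comm]
                    exact Finset.sum_congr rfl fun y _ => (by rw [Finset.mul_sum] : _)
                _ = ∑ t ∈ Finset.range (n + 1), ∑ z ∈ Z,
                    (Qm P Z ^ (t + 1)) x z * (P ^ (n + 1 - (t + 1))) z u := by
                    refine Finset.sum_congr rfl fun t _ => ?_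
                    rw [show n + 1 - (t + 1) = n - t from Nat.succ_sub_succ n t]
                    calc ∑ y, P x y * ∑ z ∈ Z, (Qm P Z ^ t) y z * (P ^ (n - t)) z u
                        = ∑ y, ∑ z ∈ Z, P x y * ((Qm P Z ^ t) y z * (P ^ (n - t)) z u) := by
                          exact Finset.sum_congr rfl fun y _ => (by rw [Finset.mul_sum] : _)
                      _ = ∑ z ∈ Z, ∑ y, P x y * ((Qm P Z ^ t) y z * (P ^ (n - t)) z u) :=
                          Finset.sum_comm
                      _ = ∑ z ∈ Z, (Qm P Z ^ (t + 1)) x z * (P ^ (n - t)) z u := by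
                          refine Finset.sum_congr rfl fun z _ => ?_
                          rw [pow_succ', Matrix.mul_apply, Finset.sum_mul]
                          refine Finset.sum_congr rfl fun y _ => ?_
                          rw [hPQ y]; ring
            · by_cases hu : u ∈ Z
              · simp [hu]
              · simp only [if_neg hu]
                rw [pow_succ', Matrix.mul_apply]
                exact Finset.sum_congr rfl fun y _ => by rw [hPQ y]
        _ = (∑ t ∈ Finset.range (n + 1 + 1), ∑ z ∈ Z,
              (Qm P Z ^ t) x z * (P ^ (n + 1 - t)) z u)
            + (if u ∈ Z then 0 else (Qm P Z ^ (n + 1)) x u) := by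
            congr 1
            conv_rhs => rw [Finset.sum_range_succ']
            rw [sum_one_restrict' (Z := Z) x u (n + 1 - 0), if_neg hx, add_zero]

lemma mass (hP1 : ∀ x, ∑ y, P x y = 1) (x : Ω) (N : ℕ) :
    (∑ t ∈ Finset.range (N + 1), ∑ z ∈ Z, (Qm P Z ^ t) x z) + survSet P Z N x = 1 := by
  have h := Ppow_rowsum hP1 N x
  have hdec : ∀ u, (P ^ N) x u = (∑ t ∈ Finset.range (N + 1), ∑ z ∈ Z,
      (Qm P Z ^ t) x z * (P ^ (N - t)) z u) + (if u ∈ Z then 0 else (Qm P Z ^ N) x u) :=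
    fun u => decomp N x u
  calc (∑ t ∈ Finset.range (N + 1), ∑ z ∈ Z, (Qm P Z ^ t) x z) + survSet P Z N x
      = (∑ t ∈ Finset.range (N + 1), ∑ z ∈ Z, (Qm P Z ^ t) x z *
          ∑ u, (P ^ (N - t)) z u) + survSet P Z N x := by
        congr 1
        refine Finset.sum_congr rfl fun t _ => Finset.sum_congr rfl fun z _ => ?_
        rw [Ppow_rowsum hP1, mul_one]
    _ = (∑ u, ∑ t ∈ Finset.range (N + 1), ∑ z ∈ Z,
          (Qm P Z ^ t) x z * (P ^ (N - t)) z u) + survSet P Z N x := by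
        congr 1
        calc ∑ t ∈ Finset.range (N+1), ∑ z ∈ Z, (Qm P Z ^ t) x z * ∑ u, (P ^ (N - t)) z u
            = ∑ t ∈ Finset.range (N+1), ∑ z ∈ Z, ∑ u, (Qm P Z ^ t) x z * (P ^ (N - t)) z u := by
              refine Finset.sum_congr rfl fun t _ => Finset.sum_congr rfl fun z _ => ?_
              rw [Finset.mul_sum]
          _ = ∑ t ∈ Finset.range (N+1), ∑ u, ∑ z ∈ Z, (Qm P Z ^ t) x z * (P ^ (N - t)) z u :=
              Finset.sum_congr rfl fun t _ => Finset.sum_comm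
          _ = ∑ u, ∑ t ∈ Finset.range (N+1), ∑ z ∈ Z, (Qm P Z ^ t) x z * (P ^ (N - t)) z u :=
              Finset.sum_comm
    _ = (∑ u, ∑ t ∈ Finset.range (N + 1), ∑ z ∈ Z,
          (Qm P Z ^ t) x z * (P ^ (N - t)) z u)
        + ∑ u, (if u ∈ Z then 0 else (Qm P Z ^ N) x u) := by
        congr 1
        rw [surv_eq, ← Finset.sum_add_sum_compl Z (fun u => if u ∈ Z then 0 else (Qm P Z ^ N) x u)]
        rw [show ∑ u ∈ Z, (if u ∈ Z then (0:ℝ) else (Qm P Z ^ N) x u) = 0 from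
          Finset.sum_eq_zero fun u hu => if_pos hu]
        rw [zero_add]
        exact Finset.sum_congr rfl fun u hu => (if_neg (Finset.mem_compl.1 hu)).symm
    _ = ∑ u, (P ^ N) x u := by
        rw [← Finset.sum_add_distrib]
        exact Finset.sum_congr rfl fun u _ => (hdec u).symm
    _ = 1 := h



variable {Ω : Type*} [Fintype Ω] [DecidableEq Ω]
variable {P : Matrix Ω Ω ℝ} {Z : Finset Ω} {π : Ω → ℝ} {lam2 : ℝ}

lemma surv_mem_zero (y : Ω) (hy : y ∈ Z) (t : ℕ) : survSet P Z t y = 0 := by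
  cases t <;> simp [survSet, hy]

lemma surv_nonneg (hP0 : ∀ x y, 0 ≤ P x y) (t : ℕ) (x : Ω) : 0 ≤ survSet P Z t x := by
  rw [surv_eq]
  exact Finset.sum_nonneg fun u _ => Qpow_nonneg hP0 t x u

lemma surv_le_one (hP0 : ∀ x y, 0 ≤ P x y) (hP1 : ∀ x, ∑ y, P x y = 1) (t : ℕ) (x : Ω) :
    survSet P Z t x ≤ 1 := by
  rw [surv_eq]
  calc ∑ u ∈ Zᶜ, (Qm P Z ^ t) x u ≤ ∑ u ∈ Zᶜ, (P ^ t) x u :=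
      Finset.sum_le_sum fun u _ => Qpow_le_Ppow hP0 t x u
    _ ≤ ∑ u, (P ^ t) x u := Finset.sum_le_sum_of_subset_of_nonneg (Finset.subset_univ _)
        (fun u _ _ => Ppow_nonneg hP0 t x u)
    _ = 1 := Ppow_rowsum hP1 t x

lemma surv_add (s t : ℕ) (x : Ω) :
    survSet P Z (s + t) x = ∑ y, (Qm P Z ^ s) x y * survSet P Z t y := by
  rw [surv_eq]
  calc ∑ u ∈ Zᶜ, (Qm P Z ^ (s + t)) x u
      = ∑ u ∈ Zᶜ, ∑ y, (Qm P Z ^ s) x y * (Qm P Z ^ t) y u := by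
        refine Finset.sum_congr rfl fun u _ => ?_
        rw [pow_add, Matrix.mul_apply]
    _ = ∑ y, ∑ u ∈ Zᶜ, (Qm P Z ^ s) x y * (Qm P Z ^ t) y u := Finset.sum_comm
    _ = ∑ y, (Qm P Z ^ s) x y * survSet P Z t y := by
        refine Finset.sum_congr rfl fun y _ => ?_
        rw [surv_eq, Finset.mul_sum]

lemma surv_exists (hΩ : Nonempty Ω) (hP0 : ∀ x y, 0 ≤ P x y) (hP1 : ∀ x, ∑ y, P x y = 1)
    (hirr : ∀ x y, ∃ t : ℕ, 0 < (P ^ t) x y) (hlazy : ∀ x, (1 : ℝ) / 2 ≤ P x x)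
    (hZ : Z.Nonempty) (x : Ω) {p : ℝ} (hp0 : 0 < p) :
    ∃ s : ℕ, survSet P Z s x ≤ p := by
  haveI := hΩ
  obtain ⟨z₀, hz₀⟩ := hZ
  have hpos : ∀ y : Ω, ∃ t, 0 < (P ^ t) y z₀ := fun y => hirr y z₀
  have hper : ∀ (y : Ω) (t : ℕ), 0 < (P ^ t) y z₀ → 0 < (P ^ (t + 1)) y z₀ := by
    intro y t ht
    rw [pow_succ', Matrix.mul_apply]
    have hterm : 0 < P y y * (P ^ t) y z₀ :=
      mul_pos (lt_of_lt_of_le (by norm_num) (hlazy y)) ht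
    exact lt_of_lt_of_le hterm (Finset.single_le_sum
      (fun w _ => mul_nonneg (hP0 y w) (Ppow_nonneg hP0 t w z₀)) (Finset.mem_univ y))
  have hmono : ∀ (y : Ω) (s t : ℕ), s ≤ t → 0 < (P ^ s) y z₀ → 0 < (P ^ t) y z₀ := by
    intro y s t hst h
    induction t, hst using Nat.le_induction with
    | base => exact h
    | succ n hn ih => exact hper y n ih
  set T : Ω → ℕ := fun y => (hpos y).choose with hT
  set t0 : ℕ := Finset.univ.sup T with ht0
  have ht0pos : ∀ y, 0 < (P ^ t0) y z₀ := fun y =>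
    hmono y (T y) t0 (Finset.le_sup (Finset.mem_univ y)) (hpos y).choose_spec
  set δ : ℝ := Finset.univ.inf' Finset.univ_nonempty (fun y => (P ^ t0) y z₀) with hδ
  have hδpos : 0 < δ := (Finset.lt_inf'_iff _).2 fun y _ => ht0pos y
  have hδle : ∀ y, δ ≤ (P ^ t0) y z₀ := fun y => Finset.inf'_le _ (Finset.mem_univ y)
  have hrow : ∀ y, (∑ u ∈ Zᶜ, (P ^ t0) y u) + (P ^ t0) y z₀ ≤ 1 := by
    intro y
    calc (∑ u ∈ Zᶜ, (P ^ t0) y u) + (P ^ t0) y z₀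
        ≤ (∑ u ∈ Zᶜ, (P ^ t0) y u) + ∑ u ∈ Z, (P ^ t0) y u :=
          add_le_add_right (Finset.single_le_sum
            (fun u _ => Ppow_nonneg hP0 t0 y u) hz₀) _
      _ = ∑ u, (P ^ t0) y u := by
          rw [add_comm, Finset.sum_add_sum_compl]
      _ = 1 := Ppow_rowsum hP1 t0 y
  have hδ1 : δ ≤ 1 := by
    have h1 := hrow (Classical.arbitrary Ω)
    have h2 := hδle (Classical.arbitrary Ω)
    have h3 : 0 ≤ ∑ u ∈ Zᶜ, (P ^ t0) (Classical.arbitrary Ω) u :=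
      Finset.sum_nonneg fun u _ => Ppow_nonneg hP0 t0 _ u
    linarith
  have hkey : ∀ y, survSet P Z t0 y ≤ 1 - δ := by
    intro y
    rw [surv_eq]
    have h1 : ∑ u ∈ Zᶜ, (Qm P Z ^ t0) y u ≤ ∑ u ∈ Zᶜ, (P ^ t0) y u :=
      Finset.sum_le_sum fun u _ => Qpow_le_Ppow hP0 t0 y u
    have h2 := hrow y
    have h3 := hδle y
    linarith
  have hiter : ∀ k : ℕ, survSet P Z (k * t0) x ≤ (1 - δ) ^ k := by
    intro k
    induction k with
    | zero => simpa using surv_le_one hP0 hP1 0 x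
    | succ k ih =>
      rw [Nat.succ_mul, surv_add]
      calc ∑ y, (Qm P Z ^ (k * t0)) x y * survSet P Z t0 y
          ≤ ∑ y, (Qm P Z ^ (k * t0)) x y * ((1 - δ) * (if y ∈ Z then 0 else 1)) := by
            refine Finset.sum_le_sum fun y _ => ?_
            refine mul_le_mul_of_nonneg_left ?_ (Qpow_nonneg hP0 _ x y)
            by_cases hy : y ∈ Z
            · rw [surv_mem_zero y hy, if_pos hy, mul_zero]
            · rw [if_neg hy, mul_one]
              exact hkey y
        _ = (1 - δ) * ∑ u ∈ Zᶜ, (Qm P Z ^ (k * t0)) x u := by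
            rw [Finset.mul_sum, ← Finset.sum_add_sum_compl Z]
            rw [show ∑ y ∈ Z, (Qm P Z ^ (k * t0)) x y * ((1 - δ) * (if y ∈ Z then 0 else 1))
                = 0 from Finset.sum_eq_zero fun y hy => by rw [if_pos hy, mul_zero, mul_zero]]
            rw [zero_add]
            refine Finset.sum_congr rfl fun y hy => ?_
            rw [if_neg (Finset.mem_compl.1 hy), mul_one]
            ring
        _ = (1 - δ) * survSet P Z (k * t0) x := by rw [← surv_eq]
        _ ≤ (1 - δ) * (1 - δ) ^ k :=
            mul_le_mul_of_nonneg_left ih (by linarith)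
        _ = (1 - δ) ^ (k + 1) := (pow_succ' (1 - δ) k).symm
  obtain ⟨k, hk⟩ := exists_pow_lt_of_lt_one hp0 (by linarith : 1 - δ < 1)
  exact ⟨k * t0, le_trans (hiter k) hk.le⟩



variable {Ω : Type*} [Fintype Ω] [DecidableEq Ω]
variable {P : Matrix Ω Ω ℝ} {Z : Finset Ω} {π : Ω → ℝ} {lam2 : ℝ}

lemma Dle1 (hP0 : ∀ x y, 0 ≤ P x y) (hP1 : ∀ x, ∑ y, P x y = 1)
    (hπ0 : ∀ x, 0 < π x) (hπ1 : ∑ x, π x = 1) (hZ : Z.Nonempty) (m : ℕ) :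
    (1 / 2) * ∑ u, |(∑ z ∈ Z, π z * (P ^ m) z u) / (∑ w ∈ Z, π w) - π u| ≤ 1 := by
  have hπZ : 0 < ∑ w ∈ Z, π w := Finset.sum_pos (fun w _ => hπ0 w) hZ
  have hnu_nonneg : ∀ u, 0 ≤ (∑ z ∈ Z, π z * (P ^ m) z u) / (∑ w ∈ Z, π w) := fun u =>
    div_nonneg (Finset.sum_nonneg fun z _ =>
      mul_nonneg (hπ0 z).le (Ppow_nonneg hP0 m z u)) hπZ.le
  have htot : ∑ u, (∑ z ∈ Z, π z * (P ^ m) z u) / (∑ w ∈ Z, π w) = 1 := by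
    rw [← Finset.sum_div]
    rw [show ∑ u, ∑ z ∈ Z, π z * (P ^ m) z u = ∑ z ∈ Z, ∑ u, π z * (P ^ m) z u from
      Finset.sum_comm]
    rw [show ∑ z ∈ Z, ∑ u, π z * (P ^ m) z u = ∑ z ∈ Z, π z from
      Finset.sum_congr rfl fun z _ => by rw [← Finset.mul_sum, Ppow_rowsum hP1, mul_one]]
    exact div_self hπZ.ne'
  have habs : ∀ u, |(∑ z ∈ Z, π z * (P ^ m) z u) / (∑ w ∈ Z, π w) - π u|
      ≤ (∑ z ∈ Z, π z * (P ^ m) z u) / (∑ w ∈ Z, π w) + π u := by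
    intro u
    rw [sub_eq_add_neg]
    refine (abs_add_le _ _).trans ?_
    rw [abs_neg, abs_of_nonneg (hnu_nonneg u), abs_of_pos (hπ0 u)]
  calc (1 / 2) * ∑ u, |(∑ z ∈ Z, π z * (P ^ m) z u) / (∑ w ∈ Z, π w) - π u|
      ≤ (1 / 2) * ∑ u, ((∑ z ∈ Z, π z * (P ^ m) z u) / (∑ w ∈ Z, π w) + π u) := by
        refine mul_le_mul_of_nonneg_left (Finset.sum_le_sum fun u _ => habs u) (by norm_num)
    _ = 1 := by rw [Finset.sum_add_distrib, htot, hπ1]; norm_num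

lemma Dbound (hP0 : ∀ x y, 0 ≤ P x y) (hP1 : ∀ x, ∑ y, P x y = 1)
    (hπ0 : ∀ x, 0 < π x) (hπ1 : ∑ x, π x = 1)
    (hrev : ∀ x y, π x * P x y = π y * P y x)
    (hirr : ∀ x y, ∃ t : ℕ, 0 < (P ^ t) x y)
    (hlazy : ∀ x, (1 : ℝ) / 2 ≤ P x x)
    (hub : lam2 ∈ upperBounds {r : ℝ | ∃ f : Ω → ℝ, f ≠ 0 ∧ (∑ v, π v * f v) = 0 ∧
      P.mulVec f = r • f})
    (hl0 : 0 ≤ lam2) (hlt1 : lam2 < 1)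
    (hZ : Z.Nonempty) {ε : ℝ} (hε0 : 0 < ε) {m : ℕ}
    (hm : ⌈(1 - lam2)⁻¹ *
        Real.log ((∑ u ∈ Zᶜ, π u) / ((∑ u ∈ Z, π u) * ε ^ 2)) / 2⌉₊ ≤ m) :
    (1 / 2) * ∑ u, |(∑ z ∈ Z, π z * (P ^ m) z u) / (∑ w ∈ Z, π w) - π u| ≤ ε := by
  have hπZ : 0 < ∑ w ∈ Z, π w := Finset.sum_pos (fun w _ => hπ0 w) hZ
  set πZ := ∑ w ∈ Z, π w with hπZdef
  set πZc := ∑ u ∈ Zᶜ, π u with hπZcdef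
  have hπZc0 : 0 ≤ πZc := Finset.sum_nonneg fun u _ => (hπ0 u).le
  have hsum1 : πZ + πZc = 1 := by
    rw [hπZdef, hπZcdef, Finset.sum_add_sum_compl]
    exact hπ1
  set f0 : Ω → ℝ := fun u => (if u ∈ Z then πZ⁻¹ else 0) - 1 with hf0
  have hsplit_ite : ∀ (g : Ω → ℝ), ∑ u, g u * (if u ∈ Z then πZ⁻¹ else 0)
      = (∑ u ∈ Z, g u) * πZ⁻¹ := by
    intro g
    rw [← Finset.sum_add_sum_compl Z (fun u => g u * (if u ∈ Z then πZ⁻¹ else 0))]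
    rw [show ∑ u ∈ Zᶜ, g u * (if u ∈ Z then πZ⁻¹ else 0) = 0 from
      Finset.sum_eq_zero fun u hu => by rw [if_neg (Finset.mem_compl.1 hu), mul_zero]]
    rw [add_zero, Finset.sum_mul]
    exact Finset.sum_congr rfl fun u hu => by rw [if_pos hu]
  have horth : ∑ u, π u * f0 u = 0 := by
    calc ∑ u, π u * f0 u
        = (∑ u, π u * (if u ∈ Z then πZ⁻¹ else 0)) - ∑ u, π u := by
          simp only [hf0, mul_sub, mul_one, Finset.sum_sub_distrib]
      _ = πZ * πZ⁻¹ - 1 := by rw [hsplit_ite (fun u => π u), hπ1, hπZdef]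
      _ = 0 := by rw [mul_inv_cancel₀ hπZ.ne']; ring
  have hnormsq : ∑ u, π u * f0 u ^ 2 = πZc / πZ := by
    rw [← Finset.sum_add_sum_compl Z (fun u => π u * f0 u ^ 2)]
    rw [show ∑ u ∈ Z, π u * f0 u ^ 2 = πZ * (πZ⁻¹ - 1) ^ 2 from by
      rw [hπZdef, Finset.sum_mul]
      exact Finset.sum_congr rfl fun u hu => by simp only [hf0, if_pos hu, ← hπZdef]]
    rw [show ∑ u ∈ Zᶜ, π u * f0 u ^ 2 = πZc from by
      rw [hπZcdef]
      exact Finset.sum_congr rfl fun u hu => by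
        simp only [hf0, if_neg (Finset.mem_compl.1 hu)]
        ring]
    have hc : πZc = 1 - πZ := by linarith
    rw [hc]
    field_simp
    ring
  have hF := pow_contract hP0 hP1 hπ0 hπ1 hrev hirr hlazy hub hl0 f0 horth m
  set F := (P ^ m).mulVec f0 with hFdef
  have hrel : ∀ u, (∑ z ∈ Z, π z * (P ^ m) z u) / πZ - π u = π u * F u := by
    intro u
    have h1 : ∑ z ∈ Z, π z * (P ^ m) z u = π u * ∑ z ∈ Z, (P ^ m) u z := by
      rw [Finset.mul_sum]
      exact Finset.sum_congr rfl fun z _ => rev_pow hrev m z u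
    have h2 : F u = (∑ z ∈ Z, (P ^ m) u z) * πZ⁻¹ - 1 := by
      rw [hFdef]
      simp only [Matrix.mulVec, dotProduct, hf0]
      calc ∑ v, (P ^ m) u v * ((if v ∈ Z then πZ⁻¹ else 0) - 1)
          = (∑ v, (P ^ m) u v * (if v ∈ Z then πZ⁻¹ else 0)) - ∑ v, (P ^ m) u v := by
            simp only [mul_sub, mul_one, Finset.sum_sub_distrib]
        _ = (∑ z ∈ Z, (P ^ m) u z) * πZ⁻¹ - 1 := by
            rw [hsplit_ite (fun v => (P ^ m) u v), Ppow_rowsum hP1]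
    rw [h1, h2]
    field_simp
  have habs : ∑ u, |(∑ z ∈ Z, π z * (P ^ m) z u) / πZ - π u| = ∑ u, π u * |F u| := by
    refine Finset.sum_congr rfl fun u _ => ?_
    rw [hrel u, abs_mul, abs_of_pos (hπ0 u)]
  have hCS : (∑ u, π u * |F u|) ^ 2 ≤ ∑ u, π u * F u ^ 2 := by
    have h := Finset.sum_mul_sq_le_sq_mul_sq Finset.univ (fun u => Real.sqrt (π u))
      (fun u => Real.sqrt (π u) * |F u|)
    have e1 : ∑ u, Real.sqrt (π u) * (Real.sqrt (π u) * |F u|) = ∑ u, π u * |F u| :=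
      Finset.sum_congr rfl fun u _ => by rw [← mul_assoc, sq_mul_self hπ0 u]
    have e2 : ∑ u, Real.sqrt (π u) ^ 2 = 1 := by
      calc ∑ u, Real.sqrt (π u) ^ 2 = ∑ u, π u :=
            Finset.sum_congr rfl fun u _ => Real.sq_sqrt (hπ0 u).le
        _ = 1 := hπ1
    have e3 : ∑ u, (Real.sqrt (π u) * |F u|) ^ 2 = ∑ u, π u * F u ^ 2 :=
      Finset.sum_congr rfl fun u _ => by
        rw [mul_pow, Real.sq_sqrt (hπ0 u).le, sq_abs]
    rw [e1, e2, e3, one_mul] at h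
    exact h
  have hFb : ∑ u, π u * F u ^ 2 ≤ lam2 ^ (2 * m) * (πZc / πZ) := by
    rw [← hnormsq]
    exact hF.2
  set R := lam2 ^ m * Real.sqrt (πZc / πZ) with hR
  have hRnn : 0 ≤ R := mul_nonneg (pow_nonneg hl0 m) (Real.sqrt_nonneg _)
  have hRsq : R ^ 2 = lam2 ^ (2 * m) * (πZc / πZ) := by
    rw [hR, mul_pow, Real.sq_sqrt (div_nonneg hπZc0 hπZ.le), ← pow_mul]
    ring_nf
  have hsumR : ∑ u, π u * |F u| ≤ R := by
    have h1 : (∑ u, π u * |F u|) ^ 2 ≤ R ^ 2 := by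
      rw [hRsq]; exact hCS.trans hFb
    have h2 : 0 ≤ ∑ u, π u * |F u| :=
      Finset.sum_nonneg fun u _ => mul_nonneg (hπ0 u).le (abs_nonneg _)
    nlinarith
  -- numeric bound : R ≤ ε
  have hRε : R ≤ ε := by
    rcases eq_or_lt_of_le hπZc0 with hc0 | hc0
    · rw [hR, ← hc0, zero_div, Real.sqrt_zero, mul_zero]
      exact hε0.le
    · set A := πZc / (πZ * ε ^ 2) with hA
      have hApos : 0 < A := div_pos hc0 (mul_pos hπZ (pow_pos hε0 2))
      have hlam_exp : lam2 ≤ Real.exp (lam2 - 1) := by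
        linarith [Real.add_one_le_exp (lam2 - 1)]
      have h1 : lam2 ^ m ≤ Real.exp ((m : ℝ) * (lam2 - 1)) := by
        calc lam2 ^ m ≤ Real.exp (lam2 - 1) ^ m := pow_le_pow_left₀ hl0 hlam_exp m
          _ = Real.exp ((m : ℝ) * (lam2 - 1)) := by rw [← Real.exp_nat_mul]
      have h1l : 0 < 1 - lam2 := by linarith
      have hceil : (1 - lam2)⁻¹ * Real.log A / 2 ≤ (m : ℝ) :=
        le_trans (Nat.le_ceil _) (Nat.cast_le.2 hm)
      have h2 : Real.log A / 2 ≤ (m : ℝ) * (1 - lam2) := by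
        have h3 := mul_le_mul_of_nonneg_left hceil h1l.le
        have hx : (1 - lam2) * ((1 - lam2)⁻¹ * Real.log A / 2) = Real.log A / 2 := by
          field_simp
        linarith [h3, hx]
      have h3 : Real.exp ((m : ℝ) * (lam2 - 1)) ≤ Real.exp (-(Real.log A / 2)) := by
        rw [Real.exp_le_exp]
        linarith [h2]
      have h4 : Real.exp (-(Real.log A / 2)) = Real.sqrt A⁻¹ := by
        have hsq2 : Real.exp (-(Real.log A / 2)) ^ 2 = A⁻¹ := by
          rw [sq, ← Real.exp_add, show -(Real.log A / 2) + -(Real.log A / 2)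
            = -Real.log A from by ring, Real.exp_neg, Real.exp_log hApos]
        rw [← Real.sqrt_sq (Real.exp_nonneg _), hsq2]
      have h5 : Real.sqrt A⁻¹ * Real.sqrt (πZc / πZ) = ε := by
        rw [← Real.sqrt_mul (inv_nonneg.2 hApos.le)]
        have h6 : A⁻¹ * (πZc / πZ) = ε ^ 2 := by
          rw [hA]
          field_simp
        rw [h6, Real.sqrt_sq hε0.le]
      calc R = lam2 ^ m * Real.sqrt (πZc / πZ) := hR
        _ ≤ Real.exp ((m : ℝ) * (lam2 - 1)) * Real.sqrt (πZc / πZ) :=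
            mul_le_mul_of_nonneg_right h1 (Real.sqrt_nonneg _)
        _ ≤ Real.exp (-(Real.log A / 2)) * Real.sqrt (πZc / πZ) :=
            mul_le_mul_of_nonneg_right h3 (Real.sqrt_nonneg _)
        _ = ε := by rw [h4, h5]
  calc (1 / 2) * ∑ u, |(∑ z ∈ Z, π z * (P ^ m) z u) / πZ - π u|
      = (1 / 2) * ∑ u, π u * |F u| := by rw [habs]
    _ ≤ (1 / 2) * R := by linarith [hsumR]
    _ ≤ ε := by linarith [hRε, hRnn]



end St19


open St19 in
/-- For a finite lazy irreducible reversible Markov chain,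
`Z ⊂ Ω` nonempty and balanced seen from `x` (on the event `T_Z = t` the hitting
position is distributed as `π` conditioned on `Z`), `p, ε ∈ (0,1)`: with
`t_{x,Z}(p) = min{t : P_x[T_Z > t] ≤ p}` and
`r_ε = ⌈t_rel·log(π(Zᶜ)/(π(Z)ε²))/2⌉`, one has
`‖P_x^{t_{x,Z}(p)+r_ε} - π‖_TV ≤ p + ε`. -/
theorem stmt19 {Ω : Type*} [Fintype Ω] [Nonempty Ω] [DecidableEq Ω]
    (P : Matrix Ω Ω ℝ) (π : Ω → ℝ)
    (hP0 : ∀ x y, 0 ≤ P x y) (hP1 : ∀ x, ∑ y, P x y = 1)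
    (hπ0 : ∀ x, 0 < π x) (hπ1 : ∑ x, π x = 1)
    (hrev : ∀ x y, π x * P x y = π y * P y x)
    (hirr : ∀ x y, ∃ t : ℕ, 0 < (P ^ t) x y)
    (hlazy : ∀ x, (1 : ℝ) / 2 ≤ P x x)
    (lam2 : ℝ)
    (hlam2 : IsGreatest {r : ℝ | ∃ f : Ω → ℝ, f ≠ 0 ∧ (∑ v, π v * f v) = 0 ∧
      P.mulVec f = r • f} lam2)
    (Z : Finset Ω) (hZ : Z.Nonempty) (x : Ω)
    (hbal : ∀ (t : ℕ) (z : Ω), z ∈ Z →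
      fstHit P Z t x z * (∑ w ∈ Z, π w) = π z * (∑ w ∈ Z, fstHit P Z t x w))
    (p ε : ℝ) (hp0 : 0 < p) (hp1 : p < 1) (hε0 : 0 < ε) (hε1 : ε < 1) :
    (1 / 2) * ∑ u, |(P ^ (sInf {s : ℕ | survSet P Z s x ≤ p} +
        ⌈(1 - lam2)⁻¹ *
          Real.log ((∑ u ∈ Zᶜ, π u) / ((∑ u ∈ Z, π u) * ε ^ 2)) / 2⌉₊)) x u - π u|
      ≤ p + ε := by
  classical
  open St19 in
  obtain ⟨f0w, hf0w, horthw, heigw⟩ := hlam2.1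
  have hub := hlam2.2
  have hl01 := St19.eig_bounds hP0 hP1 hlazy hf0w heigw
  have hl0 : 0 ≤ lam2 := hl01.1
  have hlt1 : lam2 < 1 := by
    refine lt_of_le_of_ne hl01.2 fun h => ?_
    exact St19.eig_ne_one hP0 hP1 hπ0 hπ1 hirr hf0w horthw (by rw [← h]; exact heigw)
  have hπZ : 0 < ∑ w ∈ Z, π w := Finset.sum_pos (fun w _ => hπ0 w) hZ
  -- balance property in Q form
  have hbalQ : ∀ (t : ℕ) (z : Ω), z ∈ Z → (Qm P Z ^ t) x z * (∑ w ∈ Z, π w)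
      = π z * ∑ w ∈ Z, (Qm P Z ^ t) x w := by
    intro t z hz
    have h := hbal t z hz
    rw [St19.fstHit_eq z hz t x] at h
    rw [show ∑ w ∈ Z, fstHit P Z t x w = ∑ w ∈ Z, (Qm P Z ^ t) x w from
      Finset.sum_congr rfl fun w hw => St19.fstHit_eq w hw t x] at h
    exact h
  set T := sInf {s : ℕ | survSet P Z s x ≤ p} with hTdef
  set r := ⌈(1 - lam2)⁻¹ *
      Real.log ((∑ u ∈ Zᶜ, π u) / ((∑ u ∈ Z, π u) * ε ^ 2)) / 2⌉₊ with hrdef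
  have hTmem : survSet P Z T x ≤ p := Nat.sInf_mem
    (St19.surv_exists ‹Nonempty Ω› hP0 hP1 hirr hlazy hZ x hp0)
  set n := T + r with hn
  have hmassn := St19.mass (Z := Z) hP1 x n
  have hmassT := St19.mass (Z := Z) hP1 x T
  have hsurvnn : 0 ≤ survSet P Z n x := St19.surv_nonneg hP0 n x
  have hsurvTnn : 0 ≤ survSet P Z T x := St19.surv_nonneg hP0 T x
  -- the balanced rewriting of the hit-and-run sum
  have hbal2 : ∀ (t : ℕ) (u : Ω), ∑ z ∈ Z, (Qm P Z ^ t) x z * (P ^ (n - t)) z u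
      = (∑ z ∈ Z, (Qm P Z ^ t) x z) *
        ((∑ z ∈ Z, π z * (P ^ (n - t)) z u) / (∑ w ∈ Z, π w)) := by
    intro t u
    calc ∑ z ∈ Z, (Qm P Z ^ t) x z * (P ^ (n - t)) z u
        = ∑ z ∈ Z, (π z * (∑ w ∈ Z, (Qm P Z ^ t) x w) / (∑ w ∈ Z, π w))
            * (P ^ (n - t)) z u := by
          refine Finset.sum_congr rfl fun z hz => ?_
          congr 1
          exact (eq_div_iff hπZ.ne').2 (hbalQ t z hz)
      _ = (∑ z ∈ Z, (Qm P Z ^ t) x z) *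
          ((∑ z ∈ Z, π z * (P ^ (n - t)) z u) / (∑ w ∈ Z, π w)) := by
          rw [Finset.sum_div, Finset.mul_sum]
          refine Finset.sum_congr rfl fun z _ => ?_
          ring
  -- remainder mass
  have hrem : ∑ u, (if u ∈ Z then 0 else (Qm P Z ^ n) x u) = survSet P Z n x := by
    rw [St19.surv_eq]
    rw [← Finset.sum_add_sum_compl Z (fun u => if u ∈ Z then 0 else (Qm P Z ^ n) x u)]
    rw [show ∑ u ∈ Z, (if u ∈ Z then (0:ℝ) else (Qm P Z ^ n) x u) = 0 from
      Finset.sum_eq_zero fun u hu => if_pos hu]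
    rw [zero_add]
    exact Finset.sum_congr rfl fun u hu => if_neg (Finset.mem_compl.1 hu)
  have hremnn : ∀ u, 0 ≤ (if u ∈ Z then 0 else (Qm P Z ^ n) x u) := by
    intro u
    split
    · exact le_refl 0
    · exact St19.Qpow_nonneg hP0 n x u
  -- pointwise identity
  have hkey : ∀ u, (P ^ n) x u - π u
      = (∑ t ∈ Finset.range (n + 1), (∑ z ∈ Z, (Qm P Z ^ t) x z) *
          ((∑ z ∈ Z, π z * (P ^ (n - t)) z u) / (∑ w ∈ Z, π w) - π u))
        + ((if u ∈ Z then 0 else (Qm P Z ^ n) x u) - survSet P Z n x * π u) := by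
    intro u
    have hd := St19.decomp (P := P) (Z := Z) n x u
    rw [show ∑ t ∈ Finset.range (n + 1), ∑ z ∈ Z, (Qm P Z ^ t) x z * (P ^ (n - t)) z u
        = ∑ t ∈ Finset.range (n + 1), (∑ z ∈ Z, (Qm P Z ^ t) x z) *
          ((∑ z ∈ Z, π z * (P ^ (n - t)) z u) / (∑ w ∈ Z, π w)) from
      Finset.sum_congr rfl fun t _ => hbal2 t u] at hd
    have hm2 : (∑ t ∈ Finset.range (n + 1), ∑ z ∈ Z, (Qm P Z ^ t) x z) * π u
        + survSet P Z n x * π u = π u := by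
      rw [← add_mul, hmassn, one_mul]
    have hexp : ∑ t ∈ Finset.range (n + 1), (∑ z ∈ Z, (Qm P Z ^ t) x z) *
          ((∑ z ∈ Z, π z * (P ^ (n - t)) z u) / (∑ w ∈ Z, π w) - π u)
        = (∑ t ∈ Finset.range (n + 1), (∑ z ∈ Z, (Qm P Z ^ t) x z) *
          ((∑ z ∈ Z, π z * (P ^ (n - t)) z u) / (∑ w ∈ Z, π w)))
          - (∑ t ∈ Finset.range (n + 1), ∑ z ∈ Z, (Qm P Z ^ t) x z) * π u := by
      rw [Finset.sum_mul, ← Finset.sum_sub_distrib]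
      exact Finset.sum_congr rfl fun t _ => by ring
    rw [hexp]
    rw [hd]
    linarith [hm2]
  -- the per-time TV bounds
  have hD1 : ∀ m : ℕ, (1 / 2) * ∑ u,
      |(∑ z ∈ Z, π z * (P ^ m) z u) / (∑ w ∈ Z, π w) - π u| ≤ 1 :=
    fun m => St19.Dle1 hP0 hP1 hπ0 hπ1 hZ m
  have hDε : ∀ t, t ≤ T → (1 / 2) * ∑ u,
      |(∑ z ∈ Z, π z * (P ^ (n - t)) z u) / (∑ w ∈ Z, π w) - π u| ≤ ε := by
    intro t ht
    refine St19.Dbound hP0 hP1 hπ0 hπ1 hrev hirr hlazy hub hl0 hlt1 hZ hε0 ?_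
    rw [← hrdef]
    omega
  have hDnn : ∀ m : ℕ, 0 ≤ (1 / 2) * ∑ u,
      |(∑ z ∈ Z, π z * (P ^ m) z u) / (∑ w ∈ Z, π w) - π u| := by
    intro m
    have : 0 ≤ ∑ u, |(∑ z ∈ Z, π z * (P ^ m) z u) / (∑ w ∈ Z, π w) - π u| :=
      Finset.sum_nonneg fun u _ => abs_nonneg _
    linarith
  have hHnn : ∀ t : ℕ, 0 ≤ ∑ z ∈ Z, (Qm P Z ^ t) x z :=
    fun t => Finset.sum_nonneg fun z _ => St19.Qpow_nonneg hP0 t x z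
  -- main estimate
  have hmain : (1 / 2) * ∑ u, |(P ^ n) x u - π u|
      ≤ (∑ t ∈ Finset.range (n + 1), (∑ z ∈ Z, (Qm P Z ^ t) x z) *
          ((1 / 2) * ∑ u, |(∑ z ∈ Z, π z * (P ^ (n - t)) z u) / (∑ w ∈ Z, π w) - π u|))
        + survSet P Z n x := by
    have h1 : ∀ u, |(P ^ n) x u - π u|
        ≤ (∑ t ∈ Finset.range (n + 1), (∑ z ∈ Z, (Qm P Z ^ t) x z) *
            |(∑ z ∈ Z, π z * (P ^ (n - t)) z u) / (∑ w ∈ Z, π w) - π u|)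
          + ((if u ∈ Z then 0 else (Qm P Z ^ n) x u) + survSet P Z n x * π u) := by
      intro u
      rw [hkey u]
      refine (abs_add_le _ _).trans (add_le_add ?_ ?_)
      · refine (Finset.abs_sum_le_sum_abs _ _).trans (Finset.sum_le_sum fun t _ => ?_)
        rw [abs_mul, abs_of_nonneg (hHnn t)]
      · rw [sub_eq_add_neg]
        refine (abs_add_le _ _).trans ?_
        rw [abs_neg, abs_of_nonneg (hremnn u),
          abs_of_nonneg (mul_nonneg hsurvnn (hπ0 u).le)]
    calc (1 / 2) * ∑ u, |(P ^ n) x u - π u|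
        ≤ (1 / 2) * ∑ u, ((∑ t ∈ Finset.range (n + 1), (∑ z ∈ Z, (Qm P Z ^ t) x z) *
            |(∑ z ∈ Z, π z * (P ^ (n - t)) z u) / (∑ w ∈ Z, π w) - π u|)
          + ((if u ∈ Z then 0 else (Qm P Z ^ n) x u) + survSet P Z n x * π u)) := by
          refine mul_le_mul_of_nonneg_left (Finset.sum_le_sum fun u _ => h1 u) (by norm_num)
      _ = (1 / 2) * ((∑ t ∈ Finset.range (n + 1), (∑ z ∈ Z, (Qm P Z ^ t) x z) *
            ∑ u, |(∑ z ∈ Z, π z * (P ^ (n - t)) z u) / (∑ w ∈ Z, π w) - π u|)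
          + (survSet P Z n x + survSet P Z n x)) := by
          congr 1
          rw [Finset.sum_add_distrib]
          congr 1
          · rw [Finset.sum_comm]
            exact Finset.sum_congr rfl fun t _ => by rw [← Finset.mul_sum]
          · rw [Finset.sum_add_distrib, hrem, ← Finset.mul_sum, hπ1, mul_one]
      _ = (∑ t ∈ Finset.range (n + 1), (∑ z ∈ Z, (Qm P Z ^ t) x z) *
            ((1 / 2) * ∑ u, |(∑ z ∈ Z, π z * (P ^ (n - t)) z u) / (∑ w ∈ Z, π w) - π u|))
          + survSet P Z n x := by
          rw [mul_add, Finset.mul_sum]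
          congr 1
          · exact Finset.sum_congr rfl fun t _ => by ring
          · ring
  -- split the time sum
  have hTn : T + 1 ≤ n + 1 := by omega
  have hsplit : ∀ g : ℕ → ℝ, ∑ t ∈ Finset.range (n + 1), g t
      = (∑ t ∈ Finset.range (T + 1), g t) + ∑ t ∈ Finset.Ico (T + 1) (n + 1), g t := by
    intro g
    rw [Finset.range_eq_Ico, Finset.range_eq_Ico]
    exact (Finset.sum_Ico_consecutive g (Nat.zero_le (T + 1)) hTn).symm
  have hHico : ∑ t ∈ Finset.Ico (T + 1) (n + 1), ∑ z ∈ Z, (Qm P Z ^ t) x z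
      = survSet P Z T x - survSet P Z n x := by
    have h := hsplit (fun t => ∑ z ∈ Z, (Qm P Z ^ t) x z)
    linarith [hmassn, hmassT, h]
  have hHT1 : ∑ t ∈ Finset.range (T + 1), ∑ z ∈ Z, (Qm P Z ^ t) x z ≤ 1 := by
    linarith [hmassT, hsurvTnn]
  have hfinal : ∑ t ∈ Finset.range (n + 1), (∑ z ∈ Z, (Qm P Z ^ t) x z) *
        ((1 / 2) * ∑ u, |(∑ z ∈ Z, π z * (P ^ (n - t)) z u) / (∑ w ∈ Z, π w) - π u|)
      ≤ ε + (survSet P Z T x - survSet P Z n x) := by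
    rw [hsplit]
    refine add_le_add ?_ ?_
    · calc ∑ t ∈ Finset.range (T + 1), (∑ z ∈ Z, (Qm P Z ^ t) x z) *
            ((1 / 2) * ∑ u, |(∑ z ∈ Z, π z * (P ^ (n - t)) z u) / (∑ w ∈ Z, π w) - π u|)
          ≤ ∑ t ∈ Finset.range (T + 1), (∑ z ∈ Z, (Qm P Z ^ t) x z) * ε := by
            refine Finset.sum_le_sum fun t ht => ?_
            exact mul_le_mul_of_nonneg_left
              (hDε t (Nat.lt_succ_iff.1 (Finset.mem_range.1 ht))) (hHnn t)
        _ = (∑ t ∈ Finset.range (T + 1), ∑ z ∈ Z, (Qm P Z ^ t) x z) * ε := by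
            rw [Finset.sum_mul]
        _ ≤ 1 * ε := mul_le_mul_of_nonneg_right hHT1 hε0.le
        _ = ε := one_mul ε
    · calc ∑ t ∈ Finset.Ico (T + 1) (n + 1), (∑ z ∈ Z, (Qm P Z ^ t) x z) *
            ((1 / 2) * ∑ u, |(∑ z ∈ Z, π z * (P ^ (n - t)) z u) / (∑ w ∈ Z, π w) - π u|)
          ≤ ∑ t ∈ Finset.Ico (T + 1) (n + 1), (∑ z ∈ Z, (Qm P Z ^ t) x z) * 1 := by
            refine Finset.sum_le_sum fun t _ => ?_
            exact mul_le_mul_of_nonneg_left (hD1 (n - t)) (hHnn t)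
        _ = survSet P Z T x - survSet P Z n x := by
            rw [← hHico]
            exact Finset.sum_congr rfl fun t _ => mul_one _
  calc (1 / 2) * ∑ u, |(P ^ n) x u - π u|
      ≤ (∑ t ∈ Finset.range (n + 1), (∑ z ∈ Z, (Qm P Z ^ t) x z) *
          ((1 / 2) * ∑ u, |(∑ z ∈ Z, π z * (P ^ (n - t)) z u) / (∑ w ∈ Z, π w) - π u|))
        + survSet P Z n x := hmain
    _ ≤ (ε + (survSet P Z T x - survSet P Z n x)) + survSet P Z n x :=
        add_le_add_left hfinal _
    _ = ε + survSet P Z T x := by ring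
    _ ≤ p + ε := by linarith [hTmem]
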